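/- Let n ≥ 2 and let L be a solvable real Lie algebra with dim L = n + 2 whose derived algebra H := [L,L] is nilpotent of dimension n, and let z, y ∈ L be such that L = ℝz ⊕ ℝy ⊕ H as vector spaces and [y, x] = 0 for all x ∈ H. Then the following are equivalent: (i) L is decomposable; (ii) L is isomorphic as a Lie algebra to ℝ × L̄ (with ℝ the 1-dimensional abelian Lie algebra) for some solvable real Lie algebra L̄ with dim L̄ = n + 1 whose derived algebra [L̄,L̄] is isomorphic to H; (iii) there exists w in the center Z(H) of H with [z, y] = [z, w]. -/

import Mathlib

/-- Componentwise Lie bracket on a binary product. -/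
instance prodBracket {L₁ L₂ : Type*} [LieRing L₁] [LieRing L₂] :
    Bracket (L₁ × L₂) (L₁ × L₂) :=
  ⟨fun x y => (⁅x.1, y.1⁆, ⁅x.2, y.2⁆)⟩

/-- The direct product of two Lie rings. -/
instance prodLieRing {L₁ L₂ : Type*} [LieRing L₁] [LieRing L₂] : LieRing (L₁ × L₂) where
  add_lie x y z := Prod.ext (add_lie x.1 y.1 z.1) (add_lie x.2 y.2 z.2)
  lie_add x y z := Prod.ext (lie_add x.1 y.1 z.1) (lie_add x.2 y.2 z.2)
  lie_self x := Prod.ext (lie_self x.1) (lie_self x.2)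
  leibniz_lie x y z := Prod.ext (leibniz_lie x.1 y.1 z.1) (leibniz_lie x.2 y.2 z.2)

/-- The direct product of two Lie algebras. -/
instance prodLieAlgebra {R : Type*} [CommRing R] {L₁ L₂ : Type*} [LieRing L₁] [LieRing L₂]
    [LieAlgebra R L₁] [LieAlgebra R L₂] : LieAlgebra R (L₁ × L₂) where
  lie_smul t x y := Prod.ext (lie_smul t x.1 y.1) (lie_smul t x.2 y.2)

/-- A real Lie algebra is decomposable if it is isomorphic to the direct product of two
nonzero Lie algebras, and indecomposable otherwise. -/
def Decomposable (L : Type) [LieRing L] [LieAlgebra ℝ L] : Prop :=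
  ∃ (L₁ L₂ : Type) (_ : LieRing L₁) (_ : LieAlgebra ℝ L₁) (_ : LieRing L₂) (_ : LieAlgebra ℝ L₂),
    Nontrivial L₁ ∧ Nontrivial L₂ ∧ Nonempty (L ≃ₗ⁅ℝ⁆ (L₁ × L₂))

section Aux
open LieAlgebra Submodule Module
variable {R : Type*} [CommRing R] {L₁ L₂ : Type*} [LieRing L₁] [LieRing L₂]
  [LieAlgebra R L₁] [LieAlgebra R L₂]

def lieInl : L₁ →ₗ⁅R⁆ L₁ × L₂ where
  toFun x := (x, 0)
  map_add' x y := by simp [Prod.ext_iff]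
  map_smul' t x := by simp [Prod.ext_iff]
  map_lie' {x y} := Prod.ext rfl (lie_zero 0).symm

def lieInr : L₂ →ₗ⁅R⁆ L₁ × L₂ where
  toFun x := (0, x)
  map_add' x y := by simp [Prod.ext_iff]
  map_smul' t x := by simp [Prod.ext_iff]
  map_lie' {x y} := Prod.ext (lie_zero 0).symm rfl

def lieFst : L₁ × L₂ →ₗ⁅R⁆ L₁ :=
  { LinearMap.fst R L₁ L₂ with map_lie' := rfl }

def lieSnd : L₁ × L₂ →ₗ⁅R⁆ L₂ :=
  { LinearMap.snd R L₁ L₂ with map_lie' := rfl }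

def lieSwap : (L₁ × L₂) ≃ₗ⁅R⁆ (L₂ × L₁) :=
  { LinearEquiv.prodComm R L₁ L₂ with map_lie' := rfl }

lemma derived_one (L : Type*) [LieRing L] [LieAlgebra R L] :
    derivedSeries R L 1 = ⁅(⊤ : LieIdeal R L), (⊤ : LieIdeal R L)⁆ := by
  simp [derivedSeries_def, derivedSeriesOfIdeal_succ, derivedSeriesOfIdeal_zero]

lemma lie_mem_derived {L : Type*} [LieRing L] [LieAlgebra R L] (a b : L) :
    ⁅a, b⁆ ∈ derivedSeries R L 1 := by
  rw [derived_one]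
  exact LieSubmodule.lie_mem_lie (LieSubmodule.mem_top _) (LieSubmodule.mem_top _)

lemma mem_derived_inl {d : L₁} (hd : d ∈ derivedSeries R L₁ 1) :
    ((d, 0) : L₁ × L₂) ∈ derivedSeries R (L₁ × L₂) 1 :=
  LieIdeal.derivedSeries_map_le (f := (lieInl : L₁ →ₗ⁅R⁆ L₁ × L₂)) 1 (LieIdeal.mem_map hd)

lemma mem_derived_inr {d : L₂} (hd : d ∈ derivedSeries R L₂ 1) :
    ((0, d) : L₁ × L₂) ∈ derivedSeries R (L₁ × L₂) 1 :=
  LieIdeal.derivedSeries_map_le (f := (lieInr : L₂ →ₗ⁅R⁆ L₁ × L₂)) 1 (LieIdeal.mem_map hd)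

lemma mem_derived_fst {p : L₁ × L₂} (hp : p ∈ derivedSeries R (L₁ × L₂) 1) :
    p.1 ∈ derivedSeries R L₁ 1 :=
  LieIdeal.derivedSeries_map_le (f := (lieFst : L₁ × L₂ →ₗ⁅R⁆ L₁)) 1 (LieIdeal.mem_map hp)

lemma mem_derived_snd {p : L₁ × L₂} (hp : p ∈ derivedSeries R (L₁ × L₂) 1) :
    p.2 ∈ derivedSeries R L₂ 1 :=
  LieIdeal.derivedSeries_map_le (f := (lieSnd : L₁ × L₂ →ₗ⁅R⁆ L₂)) 1 (LieIdeal.mem_map hp)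

lemma mem_derived_of_parts {p : L₁ × L₂} (h1 : p.1 ∈ derivedSeries R L₁ 1)
    (h2 : p.2 ∈ derivedSeries R L₂ 1) : p ∈ derivedSeries R (L₁ × L₂) 1 := by
  have : p = (p.1, 0) + (0, p.2) := by simp
  rw [this]
  exact add_mem (mem_derived_inl h1) (mem_derived_inr h2)

end Aux
open LieAlgebra Submodule Module

section B
variable {V : Type*} [AddCommGroup V] [Module ℝ V]

lemma fr_sup_le [FiniteDimensional ℝ V] (p q : Submodule ℝ V) :
    finrank ℝ ↥(p ⊔ q) ≤ finrank ℝ ↥p + finrank ℝ ↥q := by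
  have := Submodule.finrank_sup_add_finrank_inf_eq p q
  omega

lemma fr_span_le (v : V) : finrank ℝ ↥(span ℝ {v}) ≤ 1 := by
  rcases eq_or_ne v 0 with rfl | h
  · rw [Submodule.span_zero_singleton]; simp
  · rw [finrank_span_singleton h]

lemma finrank_submodule_prod {M M' : Type*} [AddCommGroup M] [AddCommGroup M']
    [Module ℝ M] [Module ℝ M'] (p : Submodule ℝ M) (q : Submodule ℝ M')
    [FiniteDimensional ℝ ↥p] [FiniteDimensional ℝ ↥q] :
    finrank ℝ ↥(p.prod q) = finrank ℝ ↥p + finrank ℝ ↥q := by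
  have hinj : Function.Injective (p.subtype.prodMap q.subtype) := by
    rintro ⟨a, b⟩ ⟨a', b'⟩ h
    simp only [LinearMap.prodMap_apply, Prod.ext_iff] at h ⊢
    exact ⟨Subtype.ext h.1, Subtype.ext h.2⟩
  have hr : LinearMap.range (p.subtype.prodMap q.subtype) = p.prod q := by
    ext ⟨a, b⟩
    constructor
    · rintro ⟨⟨u, v⟩, h⟩
      rw [LinearMap.prodMap_apply, Prod.ext_iff] at h
      obtain ⟨h1, h2⟩ := h
      exact ⟨h1 ▸ u.2, h2 ▸ v.2⟩
    · rintro ⟨ha, hb⟩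
      exact ⟨(⟨a, ha⟩, ⟨b, hb⟩), rfl⟩
  have e : (↥p × ↥q) ≃ₗ[ℝ] ↥(p.prod q) :=
    (LinearEquiv.ofInjective _ hinj).trans (LinearEquiv.ofEq _ _ hr)
  rw [← e.finrank_eq, Module.finrank_prod]

lemma central_of (L₁ : Type*) [LieRing L₁] [LieAlgebra ℝ L₁] [FiniteDimensional ℝ L₁]
    (y₁ : L₁) (hy₁ : y₁ ∉ derivedSeries ℝ L₁ 1)
    (hrank : finrank ℝ L₁ ≤ finrank ℝ ↥(derivedSeries ℝ L₁ 1) + 1)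
    (hyd : ∀ d ∈ derivedSeries ℝ L₁ 1, ⁅y₁, d⁆ = 0) :
    ∀ a : L₁, ⁅y₁, a⁆ = 0 := by
  set D := (derivedSeries ℝ L₁ 1).toSubmodule with hD
  have hy0 : y₁ ≠ 0 := fun h => hy₁ (h ▸ zero_mem _)
  have hdisj : span ℝ {y₁} ⊓ D = ⊥ := by
    rw [eq_bot_iff]
    rintro v ⟨hv1, hv2⟩
    obtain ⟨t, rfl⟩ := mem_span_singleton.mp hv1
    rcases eq_or_ne t 0 with rfl | ht
    · simp
    · exact absurd (by simpa [smul_smul, inv_mul_cancel₀ ht] using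
        Submodule.smul_mem _ t⁻¹ hv2 : y₁ ∈ D) hy₁
  have hDD : finrank ℝ ↥(derivedSeries ℝ L₁ 1) = finrank ℝ ↥D := rfl
  rw [hDD] at hrank
  have hkey := Submodule.finrank_sup_add_finrank_inf_eq (span ℝ {y₁}) D
  rw [hdisj, finrank_bot, finrank_span_singleton hy0] at hkey
  have hle : finrank ℝ ↥(span ℝ {y₁} ⊔ D) ≤ finrank ℝ L₁ := Submodule.finrank_le _
  have htop : span ℝ {y₁} ⊔ D = ⊤ := Submodule.eq_top_of_finrank_eq (by omega)
  intro a
  have ha : a ∈ span ℝ {y₁} ⊔ D := htop.symm ▸ Submodule.mem_top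
  obtain ⟨u, hu, v, hv, rfl⟩ := Submodule.mem_sup.mp ha
  obtain ⟨t, rfl⟩ := mem_span_singleton.mp hu
  rw [lie_add, lie_smul, lie_self, smul_zero, zero_add, hyd v hv]

end B

open LieAlgebra Submodule Module

lemma exists_central_of_prod {L₁ L₂ : Type} [LieRing L₁] [LieAlgebra ℝ L₁]
    [LieRing L₂] [LieAlgebra ℝ L₂] [Nontrivial L₁] [Nontrivial L₂]
    (L : Type) [LieRing L] [LieAlgebra ℝ L] [FiniteDimensional ℝ L]
    [LieAlgebra.IsSolvable L] (n : ℕ)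
    (hdim : finrank ℝ L = n + 2)
    (H : LieIdeal ℝ L) (hH : H = derivedSeries ℝ L 1)
    (hHdim : finrank ℝ ↥H = n)
    (y : L) (hy : ∀ x ∈ H, ⁅y, x⁆ = 0)
    (e : L ≃ₗ⁅ℝ⁆ (L₁ × L₂)) (hcase : (e y).1 ∉ derivedSeries ℝ L₁ 1) :
    ∃ c : L, (∀ a : L, ⁅c, a⁆ = 0) ∧ c ∉ H := by
  have hfdP : FiniteDimensional ℝ (L₁ × L₂) := Module.Finite.equiv e.toLinearEquiv
  have hfd1 : FiniteDimensional ℝ L₁ :=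
    Module.Finite.of_surjective (LinearMap.fst ℝ L₁ L₂) Prod.fst_surjective
  have hfd2 : FiniteDimensional ℝ L₂ :=
    Module.Finite.of_surjective (LinearMap.snd ℝ L₁ L₂) Prod.snd_surjective
  have hsolP : LieAlgebra.IsSolvable (L₁ × L₂) := by
    have hi : Function.Injective (e.symm.toLieHom : (L₁ × L₂) →ₗ⁅ℝ⁆ L) := e.symm.injective
    exact hi.lieAlgebra_isSolvable
  have hsol1 : LieAlgebra.IsSolvable L₁ := by
    have hi : Function.Injective (lieInl : L₁ →ₗ⁅ℝ⁆ L₁ × L₂) :=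
      fun a b h => congrArg Prod.fst h
    exact hi.lieAlgebra_isSolvable
  have hsol2 : LieAlgebra.IsSolvable L₂ := by
    have hi : Function.Injective (lieInr : L₂ →ₗ⁅ℝ⁆ L₁ × L₂) :=
      fun a b h => congrArg Prod.snd h
    exact hi.lieAlgebra_isSolvable
  set D₁ := derivedSeries ℝ L₁ 1 with hD₁
  set D₂ := derivedSeries ℝ L₂ 1 with hD₂
  -- proper ideals
  have hlt1 : finrank ℝ ↥D₁ < finrank ℝ L₁ := by
    have h := derivedSeries_lt_top_of_solvable (R := ℝ) (L := L₁)
    have : D₁.toSubmodule < ⊤ := by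
      rcases lt_iff_le_and_ne.mp h with ⟨h1, h2⟩
      refine lt_iff_le_and_ne.mpr ⟨le_top, fun hc => h2 ?_⟩
      rw [← LieSubmodule.toSubmodule_inj] at *
      exact hc
    exact Submodule.finrank_lt this.ne
  have hlt2 : finrank ℝ ↥D₂ < finrank ℝ L₂ := by
    have h := derivedSeries_lt_top_of_solvable (R := ℝ) (L := L₂)
    have : D₂.toSubmodule < ⊤ := by
      rcases lt_iff_le_and_ne.mp h with ⟨h1, h2⟩
      refine lt_iff_le_and_ne.mpr ⟨le_top, fun hc => h2 ?_⟩
      rw [← LieSubmodule.toSubmodule_inj] at *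
      exact hc
    exact Submodule.finrank_lt this.ne
  -- dimension bookkeeping
  have hsum : finrank ℝ L₁ + finrank ℝ L₂ = n + 2 := by
    rw [← Module.finrank_prod, ← e.toLinearEquiv.finrank_eq, hdim]
  have hmap : LieIdeal.map e.toLieHom H = derivedSeries ℝ (L₁ × L₂) 1 := by
    rw [hH]
    exact LieIdeal.derivedSeries_map_eq 1 e.surjective
  have hfrP : finrank ℝ ↥(derivedSeries ℝ (L₁ × L₂) 1) = n := by
    rw [← hmap]
    have h1 : (LieIdeal.map e.toLieHom H).toSubmodule
        = H.toSubmodule.map e.toLinearEquiv.toLinearMap :=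
      LieIdeal.coe_map_of_surjective e.surjective
    have h2 : finrank ℝ ↥(LieIdeal.map e.toLieHom H)
        = finrank ℝ ↥(H.toSubmodule.map e.toLinearEquiv.toLinearMap) := by
      rw [← h1]; rfl
    rw [h2, LinearEquiv.finrank_map_eq, ← hHdim]; rfl
  have hprodle : (derivedSeries ℝ (L₁ × L₂) 1).toSubmodule
      ≤ (D₁.toSubmodule).prod (D₂.toSubmodule) := by
    intro p hp
    exact ⟨mem_derived_fst hp, mem_derived_snd hp⟩
  have hnle : n ≤ finrank ℝ ↥D₁ + finrank ℝ ↥D₂ := by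
    have := Submodule.finrank_mono hprodle
    rw [finrank_submodule_prod] at this
    have h3 : finrank ℝ ↥(derivedSeries ℝ (L₁ × L₂) 1).toSubmodule = n := hfrP
    have hb1 : finrank ℝ ↥D₁.toSubmodule = finrank ℝ ↥D₁ := rfl
    have hb2 : finrank ℝ ↥D₂.toSubmodule = finrank ℝ ↥D₂ := rfl
    omega
  have hrank1 : finrank ℝ L₁ ≤ finrank ℝ ↥D₁ + 1 := by omega
  -- y₁ commutes with D₁
  have hyd : ∀ d ∈ D₁, ⁅(e y).1, d⁆ = 0 := by
    intro d hd
    have h1 : ((d, 0) : L₁ × L₂) ∈ derivedSeries ℝ (L₁ × L₂) 1 := mem_derived_inl hd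
    rw [← hmap] at h1
    obtain ⟨x, hx⟩ := LieIdeal.mem_map_of_surjective e.surjective h1
    have h2 : ⁅y, (x : L)⁆ = 0 := hy _ x.2
    have h3 : ⁅e y, ((d, 0) : L₁ × L₂)⁆ = 0 := by
      rw [← hx]
      change ⁅e y, e (x : L)⁆ = 0
      rw [← e.map_lie, h2]
      exact e.toLieHom.map_zero
    exact congrArg Prod.fst h3
  have hcent := central_of L₁ (e y).1 hcase hrank1 hyd
  refine ⟨e.symm ((e y).1, 0), ?_, ?_⟩
  · intro a
    have : ⁅e.symm ((e y).1, 0), a⁆ = e.symm ⁅(((e y).1, 0) : L₁ × L₂), e a⁆ := by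
      conv_lhs => rw [← e.symm_apply_apply a]
      rw [← e.symm.map_lie]
    rw [this]
    have hz : ⁅(((e y).1, 0) : L₁ × L₂), e a⁆ = 0 := by
      have : ⁅(((e y).1, 0) : L₁ × L₂), e a⁆ = (⁅(e y).1, (e a).1⁆, ⁅(0 : L₂), (e a).2⁆) := rfl
      rw [this, hcent, zero_lie]
      exact rfl
    rw [hz]
    exact e.symm.toLieHom.map_zero
  · intro hc
    have h1 : e.toLieHom (e.symm ((e y).1, 0)) ∈ LieIdeal.map e.toLieHom H :=
      LieIdeal.mem_map hc
    rw [hmap] at h1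
    have h2 : (((e y).1, 0) : L₁ × L₂) ∈ derivedSeries ℝ (L₁ × L₂) 1 := by
      have : e.toLieHom (e.symm ((e y).1, 0)) = (((e y).1, 0) : L₁ × L₂) :=
        e.apply_symm_apply _
      rwa [this] at h1
    exact hcase (mem_derived_fst (p := (((e y).1, 0) : L₁ × L₂)) h2)

attribute [local instance 100] LieRing.ofAssociativeRing

/-- Let `L` be a solvable real Lie algebra of dimension `n + 2` (`n ≥ 2`) whose derived
algebra `H := [L,L]` is nilpotent of dimension `n`, and `z, y ∈ L` with `L = ℝz ⊕ ℝy ⊕ H`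
as vector spaces and `⁅y, H⁆ = 0`. TFAE: (i) `L` is decomposable; (ii) `L ≅ ℝ × L'` for
some solvable `L'` with `dim L' = n + 1` and `[L',L'] ≅ H`; (iii) there is `w ∈ Z(H)`
with `⁅z, y⁆ = ⁅z, w⁆`. -/
theorem stmt16 (n : ℕ) (hn : 2 ≤ n) (L : Type) [LieRing L] [LieAlgebra ℝ L]
    [FiniteDimensional ℝ L] [LieAlgebra.IsSolvable L]
    (hdim : Module.finrank ℝ L = n + 2)
    (H : LieIdeal ℝ L) (hH : H = LieAlgebra.derivedSeries ℝ L 1)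
    (hnil : LieRing.IsNilpotent ↥H)
    (hHdim : Module.finrank ℝ ↥H = n)
    (z y : L)
    (hsup : Submodule.span ℝ {z} ⊔ Submodule.span ℝ {y} ⊔ H.toSubmodule = ⊤)
    (hzind : Submodule.span ℝ {z} ⊓ (Submodule.span ℝ {y} ⊔ H.toSubmodule) = ⊥)
    (hyind : Submodule.span ℝ {y} ⊓ H.toSubmodule = ⊥)
    (hy : ∀ x ∈ H, ⁅y, x⁆ = 0) :
    List.TFAE
      [ Decomposable L,
        ∃ (L' : Type) (_ : LieRing L') (_ : LieAlgebra ℝ L'),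
          LieAlgebra.IsSolvable L' ∧ Module.finrank ℝ L' = n + 1 ∧
          Nonempty (↥(LieAlgebra.derivedSeries ℝ L' 1) ≃ₗ⁅ℝ⁆ ↥H) ∧
          Nonempty (L ≃ₗ⁅ℝ⁆ (ℝ × L')),
        ∃ w : ↥H, w ∈ LieAlgebra.center ℝ ↥H ∧ ⁅z, y⁆ = ⁅z, (w : L)⁆ ] := by
  -- common preliminaries
  have hbr : ∀ a b : L, ⁅a, b⁆ ∈ H := fun a b => by
    rw [hH]; exact lie_mem_derived a b
  have hfrH : finrank ℝ ↥H.toSubmodule = n := hHdim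
  have hspans : finrank ℝ ↥(span ℝ {z}) = 1 ∧ finrank ℝ ↥(span ℝ {y}) = 1 := by
    have h1 := fr_sup_le ((span ℝ {z}) ⊔ (span ℝ {y})) H.toSubmodule
    have h2 := fr_sup_le (span ℝ {z}) (span ℝ {y})
    have h4 := fr_span_le z
    have h5 := fr_span_le y
    rw [hsup, finrank_top, hdim] at h1
    constructor <;> omega
  obtain ⟨hfz, hfy⟩ := hspans
  have hz0 : z ≠ 0 := by
    rintro rfl
    rw [Submodule.span_zero_singleton, finrank_bot] at hfz
    omega
  have hy0 : y ≠ 0 := by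
    rintro rfl
    rw [Submodule.span_zero_singleton, finrank_bot] at hfy
    omega
  have hynotH : y ∉ H := by
    intro hmem
    have h : y ∈ span ℝ {y} ⊓ H.toSubmodule := ⟨mem_span_singleton_self y, hmem⟩
    rw [hyind] at h
    exact hy0 ((Submodule.mem_bot ℝ).mp h)
  tfae_have 3 → 2 := by
    rintro ⟨w, hw, hzw⟩
    have hwH : (w : L) ∈ H := w.2
    have hwc : ∀ x ∈ H, ⁅(w : L), x⁆ = 0 := by
      intro x hx
      have h1 := (LieModule.mem_maxTrivSubmodule ℝ ↥H ↥H w).mp hw ⟨x, hx⟩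
      have h2 : ⁅x, (w : L)⁆ = 0 := congrArg Subtype.val h1
      rw [← lie_skew, h2, neg_zero]
    set c : L := y - (w : L) with hcdef
    have hcent : ∀ a : L, ⁅c, a⁆ = 0 := by
      have hker : span ℝ {z} ⊔ span ℝ {y} ⊔ H.toSubmodule
          ≤ LinearMap.ker (LieAlgebra.ad ℝ L c) := by
        refine sup_le (sup_le ?_ ?_) ?_
        · rw [span_le, Set.singleton_subset_iff]
          simp only [SetLike.mem_coe, LinearMap.mem_ker, LieAlgebra.ad_apply]
          rw [hcdef, sub_lie, ← lie_skew y z, ← lie_skew (w : L) z, hzw]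
          abel
        · rw [span_le, Set.singleton_subset_iff]
          simp only [SetLike.mem_coe, LinearMap.mem_ker, LieAlgebra.ad_apply]
          rw [hcdef, sub_lie, lie_self, zero_sub, neg_eq_zero, ← lie_skew, hy _ hwH, neg_zero]
        · intro x hx
          simp only [LinearMap.mem_ker, LieAlgebra.ad_apply]
          rw [hcdef, sub_lie, hy x hx, hwc x hx, sub_zero]
      intro a
      have ha : a ∈ span ℝ {z} ⊔ span ℝ {y} ⊔ H.toSubmodule := by rw [hsup]; trivial
      have := hker ha
      rwa [LinearMap.mem_ker, LieAlgebra.ad_apply] at this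
    have hcent' : ∀ a : L, ⁅a, c⁆ = 0 := fun a => by
      rw [← lie_skew, hcent, neg_zero]
    -- the subalgebra S = span z ⊕ H
    let S : LieSubalgebra ℝ L :=
      { (span ℝ {z} ⊔ H.toSubmodule : Submodule ℝ L) with
        lie_mem' := fun {a b} _ _ => Submodule.mem_sup_right (hbr a b) }
    have hSmem : ∀ {a : L}, a ∈ S ↔ a ∈ span ℝ {z} ⊔ H.toSubmodule := Iff.rfl
    have hzS : z ∈ S := Submodule.mem_sup_left (mem_span_singleton_self z)
    have hHS : ∀ {x : L}, x ∈ H → x ∈ S := fun hx => Submodule.mem_sup_right hx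
    have hfdS : FiniteDimensional ℝ ↥S :=
      inferInstanceAs (FiniteDimensional ℝ ↥(span ℝ {z} ⊔ H.toSubmodule : Submodule ℝ L))
    have hsolS : LieAlgebra.IsSolvable ↥S := by
      have hi : Function.Injective (S.incl : ↥S →ₗ⁅ℝ⁆ L) := Subtype.coe_injective
      exact hi.lieAlgebra_isSolvable
    have hzH : span ℝ {z} ⊓ H.toSubmodule = ⊥ := by
      rw [eq_bot_iff, ← hzind]
      exact inf_le_inf_left _ le_sup_right
    have hSdim : finrank ℝ ↥S = n + 1 := by
      have h := Submodule.finrank_sup_add_finrank_inf_eq (span ℝ {z}) H.toSubmodule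
      rw [hzH, finrank_bot, hfz] at h
      have h3 : finrank ℝ ↥S
          = finrank ℝ ↥(span ℝ {z} ⊔ H.toSubmodule : Submodule ℝ L) := rfl
      omega
    -- the isomorphism φ : ℝ × S ≃ L
    have hφbr : ∀ (ta tb : ℝ) (sa sb : ↥S),
        ⁅ta • c + (sa : L), tb • c + (sb : L)⁆ = ⁅(sa : L), (sb : L)⁆ := by
      intro ta tb sa sb
      simp [lie_add, add_lie, lie_smul, smul_lie, hcent, hcent']
    let φ : (ℝ × ↥S) →ₗ⁅ℝ⁆ L :=
      { toFun := fun p => p.1 • c + (p.2 : L)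
        map_add' := fun p q => by
          show (p.1 + q.1) • c + ((p.2 : L) + (q.2 : L))
              = p.1 • c + (p.2 : L) + (q.1 • c + (q.2 : L))
          rw [add_smul]
          abel
        map_smul' := fun t p => by
          show (t * p.1) • c + t • (p.2 : L) = t • (p.1 • c + (p.2 : L))
          rw [mul_smul, smul_add]
        map_lie' := fun {p q} => by
          show ⁅p.1, q.1⁆ • c + ⁅(p.2 : L), (q.2 : L)⁆
              = ⁅p.1 • c + (p.2 : L), q.1 • c + (q.2 : L)⁆
          have hR : ⁅p.1, q.1⁆ = (0 : ℝ) := by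
            rw [LieRing.of_associative_ring_bracket]; ring
          rw [hR, zero_smul, zero_add, ← hφbr p.1 q.1 p.2 q.2] }
    have hφ : ∀ p : ℝ × ↥S, φ p = p.1 • c + (p.2 : L) := fun p => rfl
    have hdisjy : span ℝ {y} ⊓ (span ℝ {z} ⊔ H.toSubmodule) = ⊥ := by
      rw [eq_bot_iff]
      rintro v ⟨hv1, hv2⟩
      obtain ⟨u, hu, x, hx, huvx⟩ := Submodule.mem_sup.mp hv2
      have hu' : u = v - x := eq_sub_of_add_eq huvx
      have h1 : u ∈ span ℝ {z} ⊓ (span ℝ {y} ⊔ H.toSubmodule) := by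
        refine ⟨hu, ?_⟩
        rw [hu']
        exact sub_mem (Submodule.mem_sup_left hv1) (Submodule.mem_sup_right hx)
      rw [hzind] at h1
      have hu0 : u = 0 := (Submodule.mem_bot ℝ).mp h1
      have h2 : v ∈ span ℝ {y} ⊓ H.toSubmodule := by
        refine ⟨hv1, ?_⟩
        rw [← huvx, hu0, zero_add]
        exact hx
      rw [hyind] at h2
      exact h2
    have hker0 : ∀ p : ℝ × ↥S, φ p = 0 → p = 0 := by
      rintro ⟨t, s⟩ h
      rw [hφ] at h
      obtain ⟨u, hu, x, hx, hsx⟩ := Submodule.mem_sup.mp s.2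
      obtain ⟨α, rfl⟩ := mem_span_singleton.mp hu
      have hs' : (s : L) = α • z + x := hsx.symm
      have h2 : t • y = (-α) • z + (t • (w : L) - x) := by
        rw [hcdef] at h
        rw [hs'] at h
        have hexp : t • (y - (w : L)) + (α • z + x)
            = t • y - ((-α) • z + (t • (w : L) - x)) := by
          rw [smul_sub, neg_smul]
          abel
        rw [hexp, sub_eq_zero] at h
        exact h
      have hty : t • y ∈ span ℝ {y} ⊓ (span ℝ {z} ⊔ H.toSubmodule) := by
        refine ⟨Submodule.smul_mem _ _ (mem_span_singleton_self y), ?_⟩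
        rw [h2]
        exact add_mem (Submodule.mem_sup_left (Submodule.smul_mem _ _
          (mem_span_singleton_self z)))
          (Submodule.mem_sup_right (sub_mem (Submodule.smul_mem _ _ hwH) hx))
      rw [hdisjy] at hty
      have ht0 : t = 0 := by
        rcases smul_eq_zero.mp ((Submodule.mem_bot ℝ).mp hty) with h' | h'
        · exact h'
        · exact absurd h' hy0
      have hs0 : (s : L) = 0 := by
        rw [ht0, zero_smul, zero_add] at h
        exact h
      rw [Prod.ext_iff]
      exact ⟨ht0, Subtype.ext hs0⟩
    have hinj : Function.Injective φ := by
      intro p q hpq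
      have hpq' : φ.toLinearMap p = φ.toLinearMap q := hpq
      have h1 : φ.toLinearMap (p - q) = 0 := by rw [map_sub, hpq', sub_self]
      have h2 := hker0 _ h1
      exact sub_eq_zero.mp h2
    have hsurj : Function.Surjective φ := by
      have hrange : span ℝ {z} ⊔ span ℝ {y} ⊔ H.toSubmodule
          ≤ LinearMap.range φ.toLinearMap := by
        refine sup_le (sup_le ?_ ?_) ?_
        · rw [span_le, Set.singleton_subset_iff]
          exact ⟨(0, ⟨z, hzS⟩), by rw [LieHom.coe_toLinearMap, hφ, zero_smul, zero_add]⟩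
        · rw [span_le, Set.singleton_subset_iff]
          refine ⟨(1, ⟨(w : L), hHS hwH⟩), ?_⟩
          rw [LieHom.coe_toLinearMap, hφ, one_smul, hcdef]
          show y - (w : L) + (w : L) = y
          abel
        · intro x hx
          exact ⟨(0, ⟨x, hHS hx⟩), by rw [LieHom.coe_toLinearMap, hφ, zero_smul, zero_add]⟩
      intro a
      have ha : a ∈ LinearMap.range φ.toLinearMap := hrange (by rw [hsup]; trivial)
      obtain ⟨p, hp⟩ := ha
      exact ⟨p, hp⟩
    let eL : L ≃ₗ⁅ℝ⁆ (ℝ × ↥S) := (LieEquiv.ofBijective φ ⟨hinj, hsurj⟩).symm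
    -- derived series of S is isomorphic to H
    let ι : ↥S →ₗ⁅ℝ⁆ L := S.incl
    have hDmap : (LieAlgebra.derivedSeries ℝ ↥S 1).toSubmodule.map ι.toLinearMap
        = H.toSubmodule := by
      apply le_antisymm
      · rw [derived_one ↥S, LieSubmodule.lieIdeal_oper_eq_linear_span', Submodule.map_span]
        refine span_le.mpr ?_
        rintro v ⟨m, ⟨x, -, nn, -, rfl⟩, rfl⟩
        exact hbr _ _
      · have hHspan : H.toSubmodule = span ℝ
            {m : L | ∃ x ∈ (⊤ : LieIdeal ℝ L), ∃ nn ∈ (⊤ : LieIdeal ℝ L), ⁅x, nn⁆ = m} := by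
          rw [hH, derived_one L, LieSubmodule.lieIdeal_oper_eq_linear_span']
        rw [hHspan]
        refine span_le.mpr ?_
        rintro v ⟨a, -, b, -, rfl⟩
        obtain ⟨pa, hpa⟩ := hsurj a
        obtain ⟨pb, hpb⟩ := hsurj b
        have hab : ⁅a, b⁆ = ι.toLinearMap ⁅pa.2, pb.2⁆ := by
          rw [← hpa, ← hpb, hφ, hφ, hφbr]
          rfl
        rw [hab]
        exact Submodule.mem_map_of_mem (lie_mem_derived pa.2 pb.2)
    have hmemH : ∀ d : ↥(LieAlgebra.derivedSeries ℝ ↥S 1), ((d : ↥S) : L) ∈ H.toSubmodule :=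
      fun d => by
        rw [← hDmap]
        exact Submodule.mem_map_of_mem d.2
    let ψ : ↥(LieAlgebra.derivedSeries ℝ ↥S 1) →ₗ⁅ℝ⁆ ↥H :=
      { toFun := fun d => ⟨((d : ↥S) : L), hmemH d⟩
        map_add' := fun a b => Subtype.ext rfl
        map_smul' := fun t a => Subtype.ext rfl
        map_lie' := fun {a b} => Subtype.ext rfl }
    have hψinj : Function.Injective ψ := by
      intro a b hab
      have h1 := Subtype.ext_iff.mp hab
      exact Subtype.ext (Subtype.ext h1)
    have hψsurj : Function.Surjective ψ := by
      intro hval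
      have h1 : (hval : L) ∈ (LieAlgebra.derivedSeries ℝ ↥S 1).toSubmodule.map
          ι.toLinearMap := by rw [hDmap]; exact hval.2
      obtain ⟨d, hd, hdv⟩ := Submodule.mem_map.mp h1
      exact ⟨⟨d, hd⟩, Subtype.ext hdv⟩
    exact ⟨↥S, inferInstance, inferInstance, hsolS, hSdim,
      ⟨LieEquiv.ofBijective ψ ⟨hψinj, hψsurj⟩⟩, ⟨eL⟩⟩
  tfae_have 2 → 1 := by
    rintro ⟨L', iR, iA, hsolv, hdimL', ⟨eder⟩, ⟨e⟩⟩
    have hnt : Nontrivial L' :=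
      Module.nontrivial_of_finrank_pos (R := ℝ) (by rw [hdimL']; omega)
    exact ⟨ℝ, L', inferInstance, inferInstance, iR, iA, inferInstance, hnt, ⟨e⟩⟩
  tfae_have 1 → 3 := by
    rintro ⟨L₁, L₂, i1, i2, i3, i4, hnt1, hnt2, ⟨e⟩⟩
    have hcases : (e y).1 ∉ derivedSeries ℝ L₁ 1 ∨ (e y).2 ∉ derivedSeries ℝ L₂ 1 := by
      by_contra hcon
      push_neg at hcon
      obtain ⟨h1, h2⟩ := hcon
      have hmem : e y ∈ derivedSeries ℝ (L₁ × L₂) 1 := mem_derived_of_parts h1 h2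
      have hmapP : LieIdeal.map e.toLieHom H = derivedSeries ℝ (L₁ × L₂) 1 := by
        rw [hH]; exact LieIdeal.derivedSeries_map_eq 1 e.surjective
      rw [← hmapP] at hmem
      obtain ⟨x, hx⟩ := LieIdeal.mem_map_of_surjective e.surjective hmem
      have hxy : (x : L) = y := e.injective hx
      exact hynotH (hxy ▸ x.2)
    obtain ⟨c, hc, hcH⟩ : ∃ c : L, (∀ a : L, ⁅c, a⁆ = 0) ∧ c ∉ H := by
      rcases hcases with h | h
      · exact exists_central_of_prod L n hdim H hH hHdim y hy e h
      · exact exists_central_of_prod L n hdim H hH hHdim y hy (e.trans lieSwap) h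
    have hcmem : c ∈ span ℝ {z} ⊔ span ℝ {y} ⊔ H.toSubmodule := by rw [hsup]; trivial
    obtain ⟨u, hu, h0, hh0, hsum0⟩ := Submodule.mem_sup.mp hcmem
    obtain ⟨u1, hu1, u2, hu2, husum⟩ := Submodule.mem_sup.mp hu
    obtain ⟨α, rfl⟩ := mem_span_singleton.mp hu1
    obtain ⟨β, rfl⟩ := mem_span_singleton.mp hu2
    have hcform : c = α • z + β • y + h0 := by rw [← hsum0, ← husum]
    have hbrh0y : ⁅h0, y⁆ = 0 := by rw [← lie_skew, hy h0 hh0, neg_zero]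
    have hzy0 : α • ⁅z, y⁆ = 0 := by
      have h := hc y
      rw [hcform, add_lie, add_lie, smul_lie, smul_lie, lie_self, smul_zero, add_zero,
        hbrh0y, add_zero] at h
      exact h
    by_cases hα : α = 0
    · by_cases hβ : β = 0
      · exfalso
        apply hcH
        rw [hcform, hα, hβ, zero_smul, zero_smul, zero_add, zero_add]
        exact hh0
      · refine ⟨(-β⁻¹) • ⟨h0, hh0⟩, ?_, ?_⟩
        · rw [LieModule.mem_maxTrivSubmodule]
          intro x
          have hx0 : ⁅h0, (x : L)⁆ = 0 := by
            have h := hc (x : L)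
            rw [hcform, hα, zero_smul, zero_add, add_lie, smul_lie, hy _ x.2,
              smul_zero, zero_add] at h
            exact h
          refine Subtype.ext ?_
          show ⁅(x : L), (-β⁻¹) • h0⁆ = 0
          rw [lie_smul, ← lie_skew, hx0, neg_zero, smul_zero]
        · show ⁅z, y⁆ = ⁅z, ((((-β⁻¹) • (⟨h0, hh0⟩ : ↥H)) : ↥H) : L)⁆
          have hcoe : ((((-β⁻¹) • (⟨h0, hh0⟩ : ↥H)) : ↥H) : L) = (-β⁻¹) • h0 := rfl
          have h2 : β • ⁅y, z⁆ + ⁅h0, z⁆ = 0 := by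
            have h := hc z
            rw [hcform, hα, zero_smul, zero_add, add_lie, smul_lie] at h
            exact h
          have h3 : ⁅z, h0⁆ = (-β) • ⁅z, y⁆ := by
            rw [← lie_skew y z, ← lie_skew h0 z, smul_neg] at h2
            have h6 := add_eq_zero_iff_eq_neg.mp h2
            rw [neg_neg] at h6
            rw [neg_smul]
            exact h6.symm
          rw [hcoe, lie_smul, h3, smul_smul]
          rw [show (-β⁻¹) * (-β) = 1 by field_simp, one_smul]
    · have hzy : ⁅z, y⁆ = 0 := by
        rcases smul_eq_zero.mp hzy0 with h | h
        · exact absurd h hα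
        · exact h
      refine ⟨0, (LieModule.mem_maxTrivSubmodule ℝ ↥H ↥H 0).mpr (fun x => lie_zero x), ?_⟩
      rw [hzy]
      show (0 : L) = ⁅z, ((0 : ↥H) : L)⁆
      rw [ZeroMemClass.coe_zero, lie_zero]
  tfae_finish
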